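/- Let n ≥ 3 be an odd integer. There exist a constant c > 0 and a positive integer N ≥ 3 such that for all integers k, p with |k| ≥ N and p ≠ k, and for all t ∈ [−π/2, 3π/2), one has |(2πk + t)^n − (2πp + t)^n| > c (ln|k|)^{−1} (||k| − |p|| + 1)(|k| + |p|)^{n−1}. -/

import Mathlib

open Real

private lemma aux_pos (n : ℕ) (hn : 1 ≤ n) {x y : ℝ} (hy : 0 ≤ y) (hxy : y ≤ x) :
    (x - y) * x ^ (n-1) ≤ x ^ n - y ^ n := by
  have hx : 0 ≤ x := hy.trans hxy
  have h1 : y ^ (n-1) ≤ x ^ (n-1) := pow_le_pow_left₀ hy hxy _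
  have hxn : x ^ n = x ^ (n-1) * x := by rw [← pow_succ]; congr 1; omega
  have hyn : y ^ n = y ^ (n-1) * y := by rw [← pow_succ]; congr 1; omega
  nlinarith [mul_nonneg hy (sub_nonneg.2 h1)]

private lemma aux2 (n : ℕ) (hn : 1 ≤ n) : ∀ x y : ℝ, 0 < x → 0 < y →
    |x - y| * max |x| |y| ^ (n-1) ≤ |x ^ n - y ^ n| := by
  have key : ∀ x y : ℝ, 0 < y → y ≤ x →
      |x - y| * max |x| |y| ^ (n-1) ≤ |x ^ n - y ^ n| := by
    intro x y hy hxy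
    have hx : 0 < x := hy.trans_le hxy
    have h1 := aux_pos n hn hy.le hxy
    have h2 : (0:ℝ) ≤ x ^ n - y ^ n := by
      have := pow_le_pow_left₀ hy.le hxy n; linarith
    rw [abs_of_nonneg (sub_nonneg.2 hxy), abs_of_pos hx, abs_of_pos hy,
        max_eq_left hxy, abs_of_nonneg h2]
    exact h1
  intro x y hx hy
  rcases le_total y x with h | h
  · exact key x y hy h
  · have := key y x hx h
    have e1 : |x - y| = |y - x| := abs_sub_comm _ _
    have e2 : |x ^ n - y ^ n| = |y ^ n - x ^ n| := abs_sub_comm _ _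
    rw [e1, e2, max_comm]
    exact this

private lemma aux_lb {m t : ℝ} (hm3 : 3 ≤ |m|) (ht : |t| ≤ 3*π/2) :
    4 * |m| ≤ |2*π*m + t| := by
  have hπ := Real.pi_gt_three
  have h1 : |2*π*m| ≤ |2*π*m + t| + |t| := by
    calc |2*π*m| = |(2*π*m + t) + (-t)| := by ring_nf
    _ ≤ |2*π*m + t| + |(-t)| := abs_add_le _ _
    _ = |2*π*m + t| + |t| := by rw [abs_neg]
  have h2 : |2*π*m| = 2*π*|m| := by
    rw [abs_mul, abs_of_nonneg (by positivity : (0:ℝ) ≤ 2*π)]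
  nlinarith

set_option maxHeartbeats 1000000 in
theorem stmt_0 (n : ℕ) (hn : 3 ≤ n) (hodd : Odd n) :
    ∃ c : ℝ, 0 < c ∧ ∃ N : ℕ, 3 ≤ N ∧
      ∀ k p : ℤ, (N : ℤ) ≤ |k| → p ≠ k →
        ∀ t ∈ Set.Ico (-(π/2)) (3*π/2),
          |(2*π*(k:ℝ) + t)^n - (2*π*(p:ℝ) + t)^n| >
            c * (Real.log |(k:ℝ)|)⁻¹ * (|(|(k:ℝ)| - |(p:ℝ)|)| + 1)
              * (|(k:ℝ)| + |(p:ℝ)|)^(n-1) := by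
  refine ⟨1/2, by norm_num, 3, le_refl 3, ?_⟩
  intro k p hk hpk t ht
  obtain ⟨ht1, ht2⟩ := ht
  have hπ := Real.pi_gt_three
  set K : ℝ := |(k:ℝ)| with hKdef
  set P : ℝ := |(p:ℝ)| with hPdef
  have hK3 : 3 ≤ K := by
    have : ((3:ℤ):ℝ) ≤ ((|k|:ℤ):ℝ) := by exact_mod_cast hk
    simpa [hKdef] using this
  have hP0 : 0 ≤ P := abs_nonneg _
  have htabs : |t| ≤ 3*π/2 := abs_le.2 ⟨by linarith, by linarith⟩
  set x : ℝ := 2*π*(k:ℝ) + t with hxdef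
  set y : ℝ := 2*π*(p:ℝ) + t with hydef
  set A : ℝ := max |x| |y| with hAdef
  set Mx : ℝ := max K P with hMdef
  have hM3 : 3 ≤ Mx := hK3.trans (le_max_left _ _)
  have hA : 4 * Mx ≤ A := by
    rcases le_total P K with h | h
    · have h1 : 4 * K ≤ |x| := aux_lb hK3 htabs
      have : Mx = K := max_eq_left h
      rw [this]
      exact h1.trans (le_max_left _ _)
    · have hP3 : 3 ≤ P := hK3.trans h
      have h1 : 4 * P ≤ |y| := aux_lb hP3 htabs
      have : Mx = P := max_eq_right h
      rw [this]
      exact h1.trans (le_max_right _ _)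
  have hsub : x - y = 2*π*((k:ℝ) - (p:ℝ)) := by rw [hxdef, hydef]; ring
  clear_value K P x y A Mx
  have hKM : K ≤ Mx := by rw [hMdef]; exact le_max_left _ _
  have hPM : P ≤ Mx := by rw [hMdef]; exact le_max_right _ _
  have hD : |K - P| ≤ Mx := abs_le.2 ⟨by linarith, by linarith⟩
  have hSpos : (0:ℝ) < K + P := by linarith
  have hlog : 1 ≤ Real.log K := by
    have h3 : Real.exp 1 ≤ 3 := by
      have := Real.exp_one_lt_d9; linarith
    calc (1:ℝ) = Real.log (Real.exp 1) := (Real.log_exp 1).symm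
    _ ≤ Real.log K := Real.log_le_log (Real.exp_pos 1) (h3.trans hK3)
  have hloginv : (Real.log K)⁻¹ ≤ 1 := by
    rw [inv_le_one_iff₀]; right; exact hlog
  have hlogpos : 0 < (Real.log K)⁻¹ := by
    apply inv_pos.2; linarith
  have hDpos : (0:ℝ) < |K - P| + 1 := by positivity
  have hBpos : (0:ℝ) < (K + P)^(n-1) := pow_pos hSpos _
  -- reduce the RHS
  have hRHS : 1/2 * (Real.log K)⁻¹ * (|K - P| + 1) * (K + P)^(n-1)
      ≤ 1/2 * (|K - P| + 1) * (K + P)^(n-1) := by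
    nlinarith [mul_pos hDpos hBpos]
  have hAn1 : 2 * (K + P)^(n-1) ≤ A^(n-1) := by
    have h2n : (2:ℝ) ≤ 2^(n-1) := by
      calc (2:ℝ) = 2^1 := (pow_one 2).symm
      _ ≤ 2^(n-1) := pow_le_pow_right₀ (by norm_num) (by omega)
    calc 2 * (K + P)^(n-1) ≤ 2^(n-1) * (K + P)^(n-1) := by nlinarith
    _ = (2*(K + P))^(n-1) := (mul_pow _ _ _).symm
    _ ≤ A^(n-1) := pow_le_pow_left₀ (by positivity) (by linarith) _
  have hApos : 0 < A := by linarith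
  suffices h : 1/2 * (|K - P| + 1) * (K + P)^(n-1) < |x^n - y^n| by
    calc 1/2 * (Real.log K)⁻¹ * (|K - P| + 1) * (K + P)^(n-1)
        ≤ 1/2 * (|K - P| + 1) * (K + P)^(n-1) := hRHS
    _ < |x^n - y^n| := h
  rcases le_or_gt (x*y) 0 with hxy | hxy
  · -- opposite signs: |x^n - y^n| ≥ A^n
    have hAn : A^n ≤ |x^n - y^n| := by
      rcases mul_nonpos_iff.1 hxy with ⟨hx0, hy0⟩ | ⟨hx0, hy0⟩
      · have hxn : 0 ≤ x^n := pow_nonneg hx0 n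
        have hyn : y^n ≤ 0 := hodd.pow_nonpos hy0
        have habs : |x^n - y^n| = x^n - y^n := abs_of_nonneg (by linarith)
        rw [habs, hAdef]
        rcases max_cases |x| |y| with ⟨he, _⟩ | ⟨he, _⟩
        · rw [he, abs_of_nonneg hx0]; linarith
        · rw [he, abs_of_nonpos hy0, hodd.neg_pow]; linarith
      · have hxn : x^n ≤ 0 := hodd.pow_nonpos hx0
        have hyn : 0 ≤ y^n := pow_nonneg hy0 n
        have habs : |x^n - y^n| = y^n - x^n := by
          rw [abs_sub_comm]; exact abs_of_nonneg (by linarith)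
        rw [habs, hAdef]
        rcases max_cases |x| |y| with ⟨he, _⟩ | ⟨he, _⟩
        · rw [he, abs_of_nonpos hx0, hodd.neg_pow]; linarith
        · rw [he, abs_of_nonneg hy0]; linarith
    have hAsplit : A^n = A * A^(n-1) := by
      rw [← pow_succ']; congr 1; omega
    have h1 : 2 * (|K - P| + 1) ≤ A := by linarith
    have h2 : (2 * (|K - P| + 1)) * (2 * (K + P)^(n-1)) ≤ A * A^(n-1) :=
      mul_le_mul h1 hAn1 (by positivity) (by linarith)
    calc 1/2 * (|K - P| + 1) * (K + P)^(n-1)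
        < 4 * ((|K - P| + 1) * (K + P)^(n-1)) := by nlinarith [mul_pos hDpos hBpos]
    _ ≤ A * A^(n-1) := by nlinarith [h2]
    _ = A^n := hAsplit.symm
    _ ≤ |x^n - y^n| := hAn
  · -- same signs
    have hkey : |x - y| * A^(n-1) ≤ |x^n - y^n| := by
      rw [hAdef]
      rcases mul_pos_iff.1 hxy with ⟨hx0, hy0⟩ | ⟨hx0, hy0⟩
      · exact aux2 n (by omega) x y hx0 hy0
      · have := aux2 n (by omega) (-x) (-y) (by linarith) (by linarith)
        have e1 : |(-x) - (-y)| = |x - y| := by rw [neg_sub_neg, abs_sub_comm]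
        have e2 : |(-x)^n - (-y)^n| = |x^n - y^n| := by
          rw [hodd.neg_pow, hodd.neg_pow, neg_sub_neg, abs_sub_comm]
        rw [e1, e2, abs_neg, abs_neg] at this
        exact this
    have hq1 : (1:ℝ) ≤ |(k:ℝ) - (p:ℝ)| := by
      have h1 : (1:ℤ) ≤ |k - p| := Int.one_le_abs (sub_ne_zero.2 hpk.symm)
      have : ((1:ℤ):ℝ) ≤ ((|k - p|:ℤ):ℝ) := by exact_mod_cast h1
      simpa using this
    have hq2 : |K - P| ≤ |(k:ℝ) - (p:ℝ)| := by
      rw [hKdef, hPdef]; exact abs_abs_sub_abs_le_abs_sub _ _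
    have hxy2 : |x - y| = 2*π*|(k:ℝ) - (p:ℝ)| := by
      rw [hsub, abs_mul, abs_of_nonneg (by positivity : (0:ℝ) ≤ 2*π)]
    have h3 : (|K - P| + 1) ≤ |x - y| := by
      rw [hxy2]
      have e3 : π * 1 ≤ π * |(k:ℝ) - (p:ℝ)| :=
        mul_le_mul_of_nonneg_left hq1 (by positivity)
      have e4 : π * |K - P| ≤ π * |(k:ℝ) - (p:ℝ)| :=
        mul_le_mul_of_nonneg_left hq2 (by positivity)
      nlinarith [abs_nonneg (K - P)]
    have h4 : (|K - P| + 1) * (2 * (K + P)^(n-1)) ≤ |x - y| * A^(n-1) :=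
      mul_le_mul h3 hAn1 (by positivity) (by positivity)
    calc 1/2 * (|K - P| + 1) * (K + P)^(n-1)
        < 2 * ((|K - P| + 1) * (K + P)^(n-1)) := by nlinarith [mul_pos hDpos hBpos]
    _ ≤ |x - y| * A^(n-1) := by nlinarith [h4]
    _ ≤ |x^n - y^n| := hkey
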